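/- Fix e ≥ 2, d ≥ 1, a d-Rouquier e-core ρ of residue κ, and μ ∈ P_{ρ,d} (partitions of e-core ρ and e-weight d) with e-quotient μ⃗. Then the Young diagram of μ decomposes as the disjoint union of Y(ρ) and the hooks H(u) for u ∈ Y(μ⃗), and each hook H(u) has vertex of residue κ. -/

import Mathlib

open Finset

def beadSet (N : ℕ) (p : ℕ → ℕ) : Finset ℕ :=
  (Finset.Icc 1 N).image (fun k => p k + N - k)

def runnerCount (e N : ℕ) (p : ℕ → ℕ) (i : ℕ) : ℕ :=
  ((beadSet N p).filter (fun x => x % e = i)).card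

def pushedBeads (e N : ℕ) (p : ℕ → ℕ) : Finset ℕ :=
  (Finset.range e).biUnion
    (fun i => (Finset.range (runnerCount e N p i)).image (fun t => e * t + i))

def runnerPositions (e N : ℕ) (p : ℕ → ℕ) (i : ℕ) : Finset ℕ :=
  ((beadSet N p).filter (fun x => x % e = i)).image (fun x => x / e)

def IsPartitionFrom1 (p : ℕ → ℕ) : Prop := ∀ k, 1 ≤ k → p (k + 1) ≤ p k

def VanishBeyond (N : ℕ) (p : ℕ → ℕ) : Prop := ∀ k, N < k → p k = 0

def IsQuotientOf (e N : ℕ) (p : ℕ → ℕ) (Q : ℕ → ℕ → ℕ) : Prop :=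
  ∀ i, i < e → VanishBeyond (runnerCount e N p i) (Q i) ∧
    beadSet (runnerCount e N p i) (Q i) = runnerPositions e N p i


/-- `p` is a partition with `e`-core `rho` and `e`-weight `d`. -/
def InBlock (e N d : ℕ) (rho p : ℕ → ℕ) : Prop :=
  IsPartitionFrom1 p ∧ VanishBeyond N p ∧
  pushedBeads e N p = beadSet N rho ∧
  (∑ x ∈ beadSet N p, x / e) = (∑ x ∈ beadSet N rho, x / e) + d

def xcoord (e : ℕ) (b : ℕ → ℕ) (r s i : ℕ) : ℤ :=
  (r : ℤ) - ((e : ℤ) - (i : ℤ) - 1) * ((b i : ℤ) - (r : ℤ) + (s : ℤ)) +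
    ∑ l ∈ Finset.Ico (i + 1) e, (b l : ℤ)

def ycoord (e : ℕ) (b : ℕ → ℕ) (r s i : ℕ) : ℤ :=
  (s : ℤ) + (i : ℤ) * ((b i : ℤ) - (r : ℤ) + (s : ℤ)) -
    ∑ l ∈ Finset.range i, (b l : ℤ)

/-- The `e`-hook `H(r,s,i)` with arm length `i` and vertex `(x(r,s,i), y(r,s,i))`. -/
def hookSet (e : ℕ) (b : ℕ → ℕ) (r s i : ℕ) : Set (ℤ × ℤ) :=
  {p | (p.1 = xcoord e b r s i ∧
          ycoord e b r s i ≤ p.2 ∧ p.2 ≤ ycoord e b r s i + (i : ℤ)) ∨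
       (p.2 = ycoord e b r s i ∧
          xcoord e b r s i ≤ p.1 ∧ p.1 ≤ xcoord e b r s i + ((e : ℤ) - (i : ℤ) - 1))}

/-- The Young diagram of `p` as a subset of `ℤ × ℤ` (1-based nodes). -/
def YD (p : ℕ → ℕ) : Set (ℤ × ℤ) :=
  {u | ∃ r s : ℕ, 1 ≤ r ∧ 1 ≤ s ∧ s ≤ p r ∧ u = ((r : ℤ), (s : ℤ))}

/-! ### Auxiliary development -/

lemma part_anti {p : ℕ → ℕ} (hp : IsPartitionFrom1 p) :
    ∀ k k', 1 ≤ k → k ≤ k' → p k' ≤ p k := by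
  intro k k' hk hkk
  induction hkk with
  | refl => exact le_rfl
  | @step m h ih => exact le_trans (hp m (hk.trans h)) ih

/-- number of beads of `p` (with `N`-bead abacus) at positions `≥ t`. -/
def countZ (N : ℕ) (p : ℕ → ℕ) (t : ℤ) : ℕ :=
  ((beadSet N p).filter (fun x : ℕ => t ≤ (x : ℤ))).card

/-- `Mth e t l` : the least `q` with `t ≤ e*q + l`. -/
def Mth (e : ℕ) (t : ℤ) (l : ℕ) : ℕ := ((t + e - 1 - l) / e).toNat

lemma Mth_iff {e : ℕ} (he : 0 < e) (t : ℤ) (l q : ℕ) :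
    t ≤ (e : ℤ) * q + l ↔ Mth e t l ≤ q := by
  have he' : (0 : ℤ) < e := by exact_mod_cast he
  rw [Mth, Int.toNat_le]
  constructor
  · intro h
    by_contra hq
    push_neg at hq
    have h2 : ((q : ℤ) + 1) ≤ (t + e - 1 - l) / e := by omega
    have h3 := (Int.le_ediv_iff_mul_le he').mp h2
    have h4 : ((q : ℤ) + 1) * e = e * q + e := by ring
    linarith
  · intro h
    have h3 : ¬ ((q : ℤ) + 1 ≤ (t + e - 1 - l) / e) := by omega
    rw [Int.le_ediv_iff_mul_le he'] at h3
    push_neg at h3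
    have h4 : ((q : ℤ) + 1) * e = e * q + e := by ring
    linarith

lemma Mth_self {e : ℕ} (he : 0 < e) (t : ℤ) (l : ℕ) :
    t ≤ (e : ℤ) * (Mth e t l) + l := (Mth_iff he t l _).mpr le_rfl

lemma Mth_mono {e : ℕ} (he : 0 < e) (t : ℤ) {l l' : ℕ} (h : l ≤ l') :
    Mth e t l' ≤ Mth e t l := by
  refine (Mth_iff he t l' _).mp ?_
  have := Mth_self he t l
  have hc : (l : ℤ) ≤ l' := by exact_mod_cast h
  linarith

lemma Mth_le_succ {e : ℕ} (he : 0 < e) (t : ℤ) (l : ℕ) {l' : ℕ} (hl' : l' < e) :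
    Mth e t l ≤ Mth e t l' + 1 := by
  refine (Mth_iff he t l (Mth e t l' + 1)).mp ?_
  have h2 := Mth_self he t l'
  have hc : (l' : ℤ) < e := by exact_mod_cast hl'
  have h0 : (0:ℤ) ≤ l := by exact_mod_cast Nat.zero_le l
  push_cast
  nlinarith

lemma Mth_gt {e : ℕ} (he : 0 < e) (t : ℤ) (l : ℕ) (h : 1 ≤ Mth e t l) :
    (e : ℤ) * ((Mth e t l : ℤ) - 1) + l < t := by
  have h3 : ¬ (Mth e t l ≤ Mth e t l - 1) := by omega
  have h4 : ¬ (t ≤ (e : ℤ) * ((Mth e t l - 1 : ℕ)) + l) := fun hc => h3 ((Mth_iff he t l _).mp hc)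
  push_neg at h4
  have h5 : ((Mth e t l - 1 : ℕ) : ℤ) = (Mth e t l : ℤ) - 1 := by omega
  rwa [h5] at h4

lemma Mth_eq_of_ge {e : ℕ} (he : 0 < e) {t : ℤ} {i : ℕ}
    (hti : (e : ℤ) * (Mth e t i) ≤ t) {l : ℕ} (hil : i ≤ l) (hl : l < e) :
    Mth e t l = Mth e t i := by
  refine le_antisymm (Mth_mono he t hil) ?_
  by_contra hc
  push_neg at hc
  have h2 := Mth_self he t l
  have h6 : (Mth e t l : ℤ) + 1 ≤ (Mth e t i : ℤ) := by exact_mod_cast hc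
  have he' : (0:ℤ) < e := by exact_mod_cast he
  have hlc : (l:ℤ) < e := by exact_mod_cast hl
  nlinarith

lemma Mth_eq_of_lt {e : ℕ} (he : 0 < e) {t : ℤ} {i : ℕ}
    (hti : t < (e : ℤ) * (Mth e t i)) {l : ℕ} (hl : l ≤ i) :
    Mth e t l = Mth e t i := by
  refine le_antisymm ?_ (Mth_mono he t hl)
  refine (Mth_iff he t l _).mp ?_
  have : (0:ℤ) ≤ l := by exact_mod_cast Nat.zero_le l
  linarith

lemma mul_add_mod_lt {e q l : ℕ} (hl : l < e) : (e * q + l) % e = l := by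
  rw [Nat.mul_add_mod]
  exact Nat.mod_eq_of_lt hl

lemma el_inj {e l : ℕ} (he : 0 < e) : Function.Injective (fun q => e * q + l) := by
  intro a b h
  simp only [] at h
  have : e * a = e * b := by omega
  exact Nat.eq_of_mul_eq_mul_left he this

lemma sumM {e : ℕ} (he : 0 < e) {t : ℤ} (ht : 1 ≤ t) :
    ∑ l ∈ range e, ((Mth e t l : ℤ)) = t := by
  have key : ∀ l, l < e → (range t.toNat).filter (fun x => x % e = l)
      = (range (Mth e t l)).image (fun q => e * q + l) := by
    intro l hl
    ext x
    simp only [mem_filter, mem_range, mem_image]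
    constructor
    · rintro ⟨hxt, hxm⟩
      refine ⟨x / e, ?_, ?_⟩
      · by_contra hq
        push_neg at hq
        have h1 : Mth e t l ≤ x / e := hq
        have h2 := (Mth_iff he t l (x / e)).mpr h1
        have h3 : e * (x / e) + l = x := by
          conv_rhs => rw [← Nat.div_add_mod x e]
          rw [hxm]
        have h4 : ((x : ℕ) : ℤ) < t := Int.lt_toNat.mp hxt
        have h5 : ((e * (x / e) + l : ℕ) : ℤ) = (e : ℤ) * ((x / e : ℕ) : ℤ) + (l : ℤ) := by
          simp [Nat.cast_add, Nat.cast_mul]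
        rw [h3] at h5
        linarith
      · conv_rhs => rw [← Nat.div_add_mod x e]
        rw [hxm]
    · rintro ⟨q, hq, rfl⟩
      constructor
      · have h2 : ¬ (t ≤ (e:ℤ) * q + l) := by
          intro hc
          exact absurd ((Mth_iff he t l q).mp hc) (by omega)
        push_neg at h2
        refine Int.lt_toNat.mpr ?_
        push_cast
        linarith
      · exact mul_add_mod_lt hl
  have hcard : t.toNat = ∑ l ∈ range e, Mth e t l := by
    have h := Finset.card_eq_sum_card_fiberwise
      (f := fun x => x % e) (s := range t.toNat) (t := range e)
      (fun x _ => mem_range.mpr (Nat.mod_lt _ he))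
    rw [card_range] at h
    rw [h]
    refine Finset.sum_congr rfl ?_
    intro l hl
    rw [key l (mem_range.mp hl), Finset.card_image_of_injective _ (el_inj he), card_range]
  have h2 : ∑ l ∈ range e, ((Mth e t l : ℤ)) = ((∑ l ∈ range e, Mth e t l : ℕ) : ℤ) := by
    push_cast
    rfl
  rw [h2, ← hcard, Int.toNat_of_nonneg (by omega)]

lemma sum_Icc_sub (n : ℕ) : ∑ k ∈ Icc 1 n, (n - k) = ∑ q ∈ range n, q := by
  induction n with
  | zero => simp
  | succ m ih =>
      rw [Finset.sum_Icc_succ_top (by omega), Finset.sum_range_succ]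
      have h1 : ∑ k ∈ Icc 1 m, (m + 1 - k) = ∑ k ∈ Icc 1 m, ((m - k) + 1) := by
        refine Finset.sum_congr rfl ?_
        intro k hk
        simp only [mem_Icc] at hk
        omega
      rw [h1, Finset.sum_add_distrib, ih]
      simp [Nat.card_Icc]

lemma bead_mem {N : ℕ} {p : ℕ → ℕ} {x : ℕ} :
    x ∈ beadSet N p ↔ ∃ k, 1 ≤ k ∧ k ≤ N ∧ x = p k + N - k := by
  simp only [beadSet, mem_image, mem_Icc]
  constructor
  · rintro ⟨k, ⟨h1, h2⟩, rfl⟩; exact ⟨k, h1, h2, rfl⟩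
  · rintro ⟨k, h1, h2, rfl⟩; exact ⟨k, ⟨h1, h2⟩, rfl⟩

lemma bead_strict {N : ℕ} {p : ℕ → ℕ} (hp : IsPartitionFrom1 p) {k k' : ℕ}
    (hk : 1 ≤ k) (hkk : k < k') (hk' : k' ≤ N) :
    p k' + N - k' < p k + N - k := by
  have := part_anti hp k k' hk (le_of_lt hkk)
  omega

lemma bead_injOn {N : ℕ} {p : ℕ → ℕ} (hp : IsPartitionFrom1 p) :
    Set.InjOn (fun k => p k + N - k) (Finset.Icc 1 N : Finset ℕ) := by
  intro a ha b hb hab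
  simp only [coe_Icc, Set.mem_Icc] at ha hb
  simp only [] at hab
  rcases Nat.lt_trichotomy a b with h | h | h
  · exact absurd hab (Nat.ne_of_gt (bead_strict hp ha.1 h hb.2))
  · exact h
  · exact absurd hab (Nat.ne_of_lt (bead_strict hp hb.1 h ha.2))

lemma beadSet_card {N : ℕ} {p : ℕ → ℕ} (hp : IsPartitionFrom1 p) :
    (beadSet N p).card = N := by
  rw [beadSet, Finset.card_image_of_injOn (bead_injOn hp), Nat.card_Icc]
  omega

lemma countZ_le {N : ℕ} {p : ℕ → ℕ} (hp : IsPartitionFrom1 p) (t : ℤ) :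
    countZ N p t ≤ N := by
  calc countZ N p t ≤ (beadSet N p).card := Finset.card_filter_le _ _
  _ = N := beadSet_card hp

/-- Diagonal membership criterion. -/
lemma memA {N : ℕ} {p : ℕ → ℕ} (hp : IsPartitionFrom1 p) (hv : VanishBeyond N p)
    {r s : ℕ} (hr : 1 ≤ r) (hs : 1 ≤ s) :
    s ≤ p r ↔ r ≤ countZ N p ((N : ℤ) - r + s) := by
  set t : ℤ := (N : ℤ) - r + s with ht
  by_cases hrN : r ≤ N
  · constructor
    · intro hsp
      have hsub : ∀ k ∈ Finset.Icc 1 r, (fun k => p k + N - k) k ∈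
          (beadSet N p).filter (fun x : ℕ => t ≤ (x : ℤ)) := by
        intro k hk
        simp only [mem_Icc] at hk
        rw [mem_filter]
        constructor
        · exact bead_mem.mpr ⟨k, hk.1, le_trans hk.2 hrN, rfl⟩
        · have h1 : s ≤ p k := le_trans hsp (part_anti hp k r hk.1 hk.2)
          have h2 : k ≤ N := le_trans hk.2 hrN
          show t ≤ ((p k + N - k : ℕ) : ℤ)
          omega
      have hinj : Set.InjOn (fun k => p k + N - k) (Finset.Icc 1 r : Finset ℕ) := by
        intro a ha b hb hab
        refine bead_injOn hp ?_ ?_ hab <;>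
          simp only [coe_Icc, Set.mem_Icc] at * <;> omega
      have := Finset.card_le_card_of_injOn _ hsub hinj
      rwa [Nat.card_Icc, Nat.add_sub_cancel] at this
    · intro hcount
      by_contra hnot
      push_neg at hnot
      have hsub : (beadSet N p).filter (fun x : ℕ => t ≤ (x : ℤ)) ⊆
          (Finset.Icc 1 (r - 1)).image (fun k => p k + N - k) := by
        intro x hx
        rw [mem_filter] at hx
        obtain ⟨k, hk1, hk2, rfl⟩ := bead_mem.mp hx.1
        refine mem_image.mpr ⟨k, mem_Icc.mpr ⟨hk1, ?_⟩, rfl⟩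
        by_contra hk
        push_neg at hk
        have hkr : r ≤ k := by omega
        have h1 : p k ≤ p r := part_anti hp r k hr hkr
        have h2 := hx.2
        omega
      have h3 := Finset.card_le_card hsub
      have h4 := Finset.card_image_le (s := Finset.Icc 1 (r - 1)) (f := fun k => p k + N - k)
      rw [Nat.card_Icc] at h4
      have := hcount
      unfold t at *
      unfold countZ at this
      omega
  · push_neg at hrN
    have h1 : p r = 0 := hv r hrN
    have h2 : countZ N p t ≤ N := countZ_le hp t
    constructor
    · intro h; omega
    · intro h; omega

/-- Young diagram membership in terms of diagonal counts. -/
lemma YD_iff_count {N : ℕ} {p : ℕ → ℕ} (hp : IsPartitionFrom1 p) (hv : VanishBeyond N p)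
    (u : ℤ × ℤ) :
    u ∈ YD p ↔ 1 ≤ u.1 ∧ 1 ≤ u.2 ∧ u.1 ≤ (countZ N p ((N : ℤ) - u.1 + u.2) : ℤ) := by
  constructor
  · rintro ⟨r, s, hr, hs, hsp, rfl⟩
    refine ⟨?_, ?_, ?_⟩
    · show (1 : ℤ) ≤ (r : ℤ); exact_mod_cast hr
    · show (1 : ℤ) ≤ (s : ℤ); exact_mod_cast hs
    · show (r : ℤ) ≤ (countZ N p ((N : ℤ) - (r : ℤ) + (s : ℤ)) : ℤ)
      have := (memA hp hv hr hs).mp hsp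
      exact_mod_cast this
  · rintro ⟨h1, h2, h3⟩
    refine ⟨u.1.toNat, u.2.toNat, by omega, by omega, ?_, ?_⟩
    · refine (memA hp hv (r := u.1.toNat) (s := u.2.toNat) (by omega) (by omega)).mpr ?_
      have e1 : ((u.1.toNat : ℕ) : ℤ) = u.1 := Int.toNat_of_nonneg (by omega)
      have e2 : ((u.2.toNat : ℕ) : ℤ) = u.2 := Int.toNat_of_nonneg (by omega)
      rw [e1, e2]
      omega
    · have e1 : ((u.1.toNat : ℕ) : ℤ) = u.1 := Int.toNat_of_nonneg (by omega)
      have e2 : ((u.2.toNat : ℕ) : ℤ) = u.2 := Int.toNat_of_nonneg (by omega)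
      exact Prod.ext e1.symm e2.symm

lemma pushed_filter {e N : ℕ} (he : 0 < e) (p : ℕ → ℕ) {i : ℕ} (hi : i < e) :
    (pushedBeads e N p).filter (fun x => x % e = i)
      = (range (runnerCount e N p i)).image (fun q => e * q + i) := by
  ext x
  simp only [pushedBeads, mem_filter, mem_biUnion, mem_range, mem_image]
  constructor
  · rintro ⟨⟨j, hj, q, hq, rfl⟩, hmod⟩
    rw [mul_add_mod_lt hj] at hmod
    subst hmod
    exact ⟨q, hq, rfl⟩
  · rintro ⟨q, hq, rfl⟩
    exact ⟨⟨i, hi, q, hq, rfl⟩, mul_add_mod_lt hi⟩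

def RmuF (e N : ℕ) (rho : ℕ → ℕ) (Q : ℕ → ℕ → ℕ) (t : ℤ) (i : ℕ) : ℕ :=
  ((Finset.Icc 1 (runnerCount e N rho i)).filter
    (fun k => Mth e t i + k ≤ Q i k + runnerCount e N rho i)).card

def wtF (e N : ℕ) (rho : ℕ → ℕ) (Q : ℕ → ℕ → ℕ) (i : ℕ) : ℕ :=
  ∑ k ∈ Finset.Icc 1 (runnerCount e N rho i), Q i k

def rowF (e N : ℕ) (rho : ℕ → ℕ) (t : ℤ) (i r : ℕ) : ℤ :=
  (r : ℤ) + ∑ l ∈ Finset.Ico (i + 1) e, ((runnerCount e N rho l : ℤ) - (Mth e t l : ℤ))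

def ContribP (e N : ℕ) (rho : ℕ → ℕ) (Q : ℕ → ℕ → ℕ) (t : ℤ) (r s i : ℕ) : Prop :=
  i < e ∧ 1 ≤ r ∧ 1 ≤ s ∧ s ≤ Q i r ∧
    runnerCount e N rho i + s = Mth e t i + r

structure Ctx (e N d : ℕ) (rho mu : ℕ → ℕ) (Q : ℕ → ℕ → ℕ) : Prop where
  he : 2 ≤ e
  hd : 1 ≤ d
  hrhop : IsPartitionFrom1 rho
  hrhov : VanishBeyond N rho
  hcore : pushedBeads e N rho = beadSet N rho
  hrq : ∀ i, i + 1 < e → runnerCount e N rho i + d ≤ runnerCount e N rho (i + 1) + 1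
  hmup : IsPartitionFrom1 mu
  hmuv : VanishBeyond N mu
  hmupush : pushedBeads e N mu = beadSet N rho
  hmuwt : (∑ x ∈ beadSet N mu, x / e) = (∑ x ∈ beadSet N rho, x / e) + d
  hQp : ∀ i, i < e → IsPartitionFrom1 (Q i)
  hQ : IsQuotientOf e N mu Q

namespace Ctx

variable {e N d : ℕ} {rho mu : ℕ → ℕ} {Q : ℕ → ℕ → ℕ}

lemma he0 (C : Ctx e N d rho mu Q) : 0 < e := by have := C.he; omega

lemma rc_mu (C : Ctx e N d rho mu Q) {i : ℕ} (hi : i < e) :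
    runnerCount e N mu i = runnerCount e N rho i := by
  have h1 := pushed_filter (N := N) C.he0 mu hi
  rw [C.hmupush] at h1
  have h3 := congrArg Finset.card h1
  rw [Finset.card_image_of_injective _ (el_inj C.he0), card_range] at h3
  exact h3.symm

lemma rho_runner (C : Ctx e N d rho mu Q) {i : ℕ} (hi : i < e) :
    (beadSet N rho).filter (fun x => x % e = i)
      = (range (runnerCount e N rho i)).image (fun q => e * q + i) := by
  rw [← C.hcore]; exact pushed_filter C.he0 rho hi

lemma mu_runner (C : Ctx e N d rho mu Q) {i : ℕ} (hi : i < e) :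
    (beadSet N mu).filter (fun x => x % e = i)
      = (beadSet (runnerCount e N rho i) (Q i)).image (fun q => e * q + i) := by
  have h1 := (C.hQ i hi).2
  rw [C.rc_mu hi] at h1
  rw [h1, runnerPositions, Finset.image_image]
  ext x
  simp only [mem_image, mem_filter, Function.comp]
  constructor
  · intro hx
    refine ⟨x, hx, ?_⟩
    conv_rhs => rw [← Nat.div_add_mod x e, hx.2]
  · rintro ⟨y, hy, rfl⟩
    have hy2 : e * (y / e) + i = y := by
      conv_rhs => rw [← Nat.div_add_mod y e, hy.2]
    rw [hy2]
    exact hy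

lemma sumb (C : Ctx e N d rho mu Q) : ∑ l ∈ range e, runnerCount e N rho l = N := by
  have h := Finset.card_eq_sum_card_fiberwise
    (f := fun x => x % e) (s := beadSet N rho) (t := range e)
    (fun x _ => mem_range.mpr (Nat.mod_lt _ C.he0))
  rw [beadSet_card C.hrhop] at h
  exact h.symm

lemma countZ_rho (C : Ctx e N d rho mu Q) (t : ℤ) :
    countZ N rho t = ∑ l ∈ range e, (runnerCount e N rho l - Mth e t l) := by
  unfold countZ
  rw [Finset.card_eq_sum_card_fiberwise (f := fun x => x % e) (t := range e)
    (fun x _ => mem_range.mpr (Nat.mod_lt _ C.he0))]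
  refine Finset.sum_congr rfl ?_
  intro l hl
  have hle := mem_range.mp hl
  rw [Finset.filter_comm, C.rho_runner hle, Finset.filter_image,
    Finset.card_image_of_injective _ (el_inj C.he0)]
  have hpred : ((range (runnerCount e N rho l)).filter
        (fun q => t ≤ (((fun q => e * q + l) q : ℕ) : ℤ)))
      = (range (runnerCount e N rho l)).filter (fun q => Mth e t l ≤ q) := by
    refine Finset.filter_congr ?_
    intro q _
    show (t ≤ ((e * q + l : ℕ) : ℤ)) ↔ Mth e t l ≤ q
    push_cast
    exact Mth_iff C.he0 t l q
  rw [hpred]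
  have h2 : (range (runnerCount e N rho l)).filter (fun q => Mth e t l ≤ q)
      = Ico (Mth e t l) (runnerCount e N rho l) := by
    ext q
    simp only [mem_filter, mem_range, mem_Ico]
    omega
  rw [h2, Nat.card_Ico]

lemma countZ_mu (C : Ctx e N d rho mu Q) (t : ℤ) :
    countZ N mu t = ∑ l ∈ range e, RmuF e N rho Q t l := by
  unfold countZ
  rw [Finset.card_eq_sum_card_fiberwise (f := fun x => x % e) (t := range e)
    (fun x _ => mem_range.mpr (Nat.mod_lt _ C.he0))]
  refine Finset.sum_congr rfl ?_
  intro l hl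
  have hle := mem_range.mp hl
  rw [Finset.filter_comm, C.mu_runner hle, Finset.filter_image,
    Finset.card_image_of_injective _ (el_inj C.he0)]
  have hpred : ((beadSet (runnerCount e N rho l) (Q l)).filter
        (fun q => t ≤ (((fun q => e * q + l) q : ℕ) : ℤ)))
      = (beadSet (runnerCount e N rho l) (Q l)).filter (fun q => Mth e t l ≤ q) := by
    refine Finset.filter_congr ?_
    intro q _
    show (t ≤ ((e * q + l : ℕ) : ℤ)) ↔ Mth e t l ≤ q
    push_cast
    exact Mth_iff C.he0 t l q
  rw [hpred, beadSet, Finset.filter_image]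
  rw [Finset.card_image_of_injOn ((bead_injOn (C.hQp l hle)).mono
    (by exact_mod_cast Finset.coe_subset.mpr (Finset.filter_subset _ _)))]
  show ((Finset.Icc 1 (runnerCount e N rho l)).filter
      (fun k => Mth e t l ≤ Q l k + runnerCount e N rho l - k)).card = RmuF e N rho Q t l
  have h3 : ((Finset.Icc 1 (runnerCount e N rho l)).filter
        (fun k => Mth e t l ≤ Q l k + runnerCount e N rho l - k))
      = ((Finset.Icc 1 (runnerCount e N rho l)).filter
        (fun k => Mth e t l + k ≤ Q l k + runnerCount e N rho l)) := by
    refine Finset.filter_congr ?_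
    intro k hk
    simp only [mem_Icc] at hk
    omega
  rw [h3]
  rfl

lemma sumwt (C : Ctx e N d rho mu Q) : ∑ l ∈ range e, wtF e N rho Q l = d := by
  have hmu := C.hmuwt
  have hfib : ∀ (p : ℕ → ℕ), (∑ x ∈ beadSet N p, x / e)
      = ∑ l ∈ range e, ∑ x ∈ (beadSet N p).filter (fun x => x % e = l), x / e := fun p =>
    (Finset.sum_fiberwise_of_maps_to (fun x _ => mem_range.mpr (Nat.mod_lt _ C.he0)) _).symm
  rw [hfib mu, hfib rho] at hmu
  have hr : ∀ l ∈ range e, (∑ x ∈ (beadSet N rho).filter (fun x => x % e = l), x / e)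
      = ∑ k ∈ Finset.Icc 1 (runnerCount e N rho l), (runnerCount e N rho l - k) := by
    intro l hl
    have hle := mem_range.mp hl
    rw [C.rho_runner hle, Finset.sum_image (fun x _ y _ h => el_inj C.he0 h)]
    have h1 : ∀ q ∈ range (runnerCount e N rho l), (e * q + l) / e = q := by
      intro q _
      rw [Nat.mul_add_div C.he0, Nat.div_eq_of_lt hle, add_zero]
    rw [Finset.sum_congr rfl h1]
    exact (sum_Icc_sub _).symm
  have hm : ∀ l ∈ range e, (∑ x ∈ (beadSet N mu).filter (fun x => x % e = l), x / e)
      = wtF e N rho Q l + ∑ k ∈ Finset.Icc 1 (runnerCount e N rho l), (runnerCount e N rho l - k) := by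
    intro l hl
    have hle := mem_range.mp hl
    rw [C.mu_runner hle, Finset.sum_image (fun x _ y _ h => el_inj C.he0 h)]
    have h1 : ∀ q ∈ beadSet (runnerCount e N rho l) (Q l), (e * q + l) / e = q := by
      intro q _
      rw [Nat.mul_add_div C.he0, Nat.div_eq_of_lt hle, add_zero]
    rw [Finset.sum_congr rfl h1, beadSet, Finset.sum_image
      (fun x hx y hy h => bead_injOn (C.hQp l hle) (by simpa using hx) (by simpa using hy) h)]
    have h2 : ∀ k ∈ Finset.Icc 1 (runnerCount e N rho l),
        Q l k + runnerCount e N rho l - k = Q l k + (runnerCount e N rho l - k) := by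
      intro k hk
      simp only [mem_Icc] at hk
      omega
    rw [Finset.sum_congr rfl h2, Finset.sum_add_distrib]
    rfl
  rw [Finset.sum_congr rfl hm, Finset.sum_congr rfl hr, Finset.sum_add_distrib] at hmu
  omega

lemma bgap (C : Ctx e N d rho mu Q) :
    ∀ j, j < e → ∀ i, i < j → runnerCount e N rho i + d ≤ runnerCount e N rho j + 1 := by
  intro j
  induction j with
  | zero => intro _ i hi; omega
  | succ n ih =>
      intro hje i hi
      have hn := C.hrq n hje
      rcases Nat.lt_succ_iff_lt_or_eq.mp hi with h | h
      · have h1 := ih (by omega) i h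
        have hd := C.hd
        omega
      · subst h; exact hn

lemma Qvanish (C : Ctx e N d rho mu Q) {i : ℕ} (hi : i < e) :
    VanishBeyond (runnerCount e N rho i) (Q i) := by
  have h := (C.hQ i hi).1
  rwa [C.rc_mu hi] at h

lemma r_le_b (C : Ctx e N d rho mu Q) {i r : ℕ} (hi : i < e) (h : 1 ≤ Q i r) :
    r ≤ runnerCount e N rho i := by
  by_contra hc
  push_neg at hc
  rw [C.Qvanish hi r hc] at h
  omega

lemma Q_anti (C : Ctx e N d rho mu Q) {i : ℕ} (hi : i < e) {k k' : ℕ}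
    (h1 : 1 ≤ k) (h : k ≤ k') : Q i k' ≤ Q i k := part_anti (C.hQp i hi) k k' h1 h

lemma wt_ge (C : Ctx e N d rho mu Q) {i k : ℕ} (hi : i < e) (hk : 1 ≤ k)
    (h : 1 ≤ Q i k) : k ≤ wtF e N rho Q i := by
  have hkb := C.r_le_b hi h
  calc k = ∑ _j ∈ Finset.Icc 1 k, 1 := by simp [Nat.card_Icc]
  _ ≤ ∑ j ∈ Finset.Icc 1 k, Q i j := by
      refine Finset.sum_le_sum ?_
      intro j hj
      simp only [mem_Icc] at hj
      exact le_trans h (C.Q_anti hi hj.1 hj.2)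
  _ ≤ wtF e N rho Q i := Finset.sum_le_sum_of_subset (Finset.Icc_subset_Icc_right hkb)

lemma wt_le (C : Ctx e N d rho mu Q) {i : ℕ} (hi : i < e) : wtF e N rho Q i ≤ d := by
  rw [← C.sumwt]
  exact Finset.single_le_sum (fun _ _ => Nat.zero_le _) (mem_range.mpr hi)

lemma wt_pair (C : Ctx e N d rho mu Q) {i l : ℕ} (hi : i < e) (hl : l < e) (hne : i ≠ l) :
    wtF e N rho Q i + wtF e N rho Q l ≤ d := by
  rw [← C.sumwt, ← Finset.sum_pair hne]
  refine Finset.sum_le_sum_of_subset ?_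
  intro x hx
  simp only [mem_insert, mem_singleton] at hx
  rcases hx with rfl | rfl <;> simp [mem_range, hi, hl]

lemma contrib_bound (C : Ctx e N d rho mu Q) {t : ℤ} {r s i : ℕ}
    (hC : ContribP e N rho Q t r s i) :
    r ≤ wtF e N rho Q i ∧ r + Q i r ≤ wtF e N rho Q i + 1 := by
  obtain ⟨hi, hr, hs, hsQ, hTeq⟩ := hC
  have hrb := C.r_le_b hi (le_trans hs hsQ)
  constructor
  · calc r = ∑ _j ∈ Finset.Icc 1 r, 1 := by simp [Nat.card_Icc]
    _ ≤ ∑ j ∈ Finset.Icc 1 r, Q i j := by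
        refine Finset.sum_le_sum ?_
        intro j hj
        simp only [mem_Icc] at hj
        exact le_trans (le_trans hs hsQ) (C.Q_anti hi hj.1 hj.2)
    _ ≤ wtF e N rho Q i := Finset.sum_le_sum_of_subset (Finset.Icc_subset_Icc_right hrb)
  · have h1 : ∑ j ∈ Finset.Icc 1 r, Q i j ≤ wtF e N rho Q i :=
      Finset.sum_le_sum_of_subset (Finset.Icc_subset_Icc_right hrb)
    have h2 : r - 1 ≤ ∑ j ∈ Finset.Icc 1 (r - 1), Q i j := by
      calc r - 1 = ∑ _j ∈ Finset.Icc 1 (r - 1), 1 := by simp [Nat.card_Icc]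
      _ ≤ ∑ j ∈ Finset.Icc 1 (r - 1), Q i j := by
          refine Finset.sum_le_sum ?_
          intro j hj
          simp only [mem_Icc] at hj
          have := C.Q_anti hi hj.1 (le_trans hj.2 (by omega : r - 1 ≤ r))
          omega
    have h3 : ∑ j ∈ Finset.Icc 1 r, Q i j = ∑ j ∈ Finset.Icc 1 (r - 1), Q i j + Q i r := by
      conv_lhs => rw [show r = (r - 1) + 1 by omega]
      rw [Finset.sum_Icc_succ_top (by omega)]
      rw [show (r - 1) + 1 = r by omega]
    omega

lemma Rmu_le (C : Ctx e N d rho mu Q) (t : ℤ) {i : ℕ} :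
    RmuF e N rho Q t i ≤ runnerCount e N rho i := by
  have h : (Finset.Icc 1 (runnerCount e N rho i)).card = runnerCount e N rho i := by
    rw [Nat.card_Icc]; omega
  exact le_trans (Finset.card_filter_le _ _) (le_of_eq h)

lemma Rmu_lb (C : Ctx e N d rho mu Q) (t : ℤ) {i : ℕ} :
    runnerCount e N rho i ≤ RmuF e N rho Q t i + Mth e t i := by
  by_cases h : runnerCount e N rho i ≤ Mth e t i
  · omega
  · push_neg at h
    have hsub : Finset.Icc 1 (runnerCount e N rho i - Mth e t i)
        ⊆ (Finset.Icc 1 (runnerCount e N rho i)).filter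
            (fun k => Mth e t i + k ≤ Q i k + runnerCount e N rho i) := by
      intro k hk
      simp only [mem_Icc, mem_filter] at *
      have := Nat.zero_le (Q i k)
      refine ⟨⟨hk.1, by omega⟩, by omega⟩
    have h2 := Finset.card_le_card hsub
    rw [Nat.card_Icc] at h2
    unfold RmuF
    omega

lemma Rmu_bead (C : Ctx e N d rho mu Q) {t : ℤ} {i r' : ℕ} (hi : i < e)
    (hr1 : 1 ≤ r') (hrR : r' ≤ RmuF e N rho Q t i) :
    r' ≤ runnerCount e N rho i ∧ Mth e t i + r' ≤ Q i r' + runnerCount e N rho i := by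
  have h1 : r' ≤ runnerCount e N rho i := le_trans hrR (C.Rmu_le t)
  refine ⟨h1, ?_⟩
  by_contra hc
  push_neg at hc
  have hsub : (Finset.Icc 1 (runnerCount e N rho i)).filter
        (fun k => Mth e t i + k ≤ Q i k + runnerCount e N rho i)
      ⊆ Finset.Icc 1 (r' - 1) := by
    intro k hk
    simp only [mem_filter, mem_Icc] at hk ⊢
    refine ⟨hk.1.1, ?_⟩
    by_contra hk2
    push_neg at hk2
    have hkr : r' ≤ k := by omega
    have := C.Q_anti hi hr1 hkr
    omega
  have h2 := Finset.card_le_card hsub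
  rw [Nat.card_Icc] at h2
  unfold RmuF at hrR
  omega

lemma Rmu_of_bead (C : Ctx e N d rho mu Q) {t : ℤ} {i r : ℕ} (hi : i < e)
    (hr1 : 1 ≤ r) (hrb : r ≤ runnerCount e N rho i)
    (hp : Mth e t i + r ≤ Q i r + runnerCount e N rho i) :
    r ≤ RmuF e N rho Q t i := by
  have hsub : Finset.Icc 1 r ⊆ (Finset.Icc 1 (runnerCount e N rho i)).filter
      (fun k => Mth e t i + k ≤ Q i k + runnerCount e N rho i) := by
    intro k hk
    simp only [mem_Icc, mem_filter] at *
    have := C.Q_anti hi hk.1 hk.2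
    exact ⟨⟨hk.1, le_trans hk.2 hrb⟩, by omega⟩
  have h2 := Finset.card_le_card hsub
  rw [Nat.card_Icc] at h2
  unfold RmuF
  omega

lemma Rmu_eq (C : Ctx e N d rho mu Q) {t : ℤ} {i : ℕ} (hi : i < e)
    (hM : Mth e t i ≤ runnerCount e N rho i)
    (h0 : Q i (runnerCount e N rho i - Mth e t i + 1) = 0) :
    RmuF e N rho Q t i = runnerCount e N rho i - Mth e t i := by
  have hlb : runnerCount e N rho i ≤ RmuF e N rho Q t i + Mth e t i := C.Rmu_lb t
  refine le_antisymm ?_ (by omega)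
  by_contra hc
  push_neg at hc
  have h1 := C.Rmu_bead (t := t) hi (r' := runnerCount e N rho i - Mth e t i + 1) (by omega) (by omega)
  rw [h0] at h1
  omega

lemma facts2 (C : Ctx e N d rho mu Q) {t : ℤ} {r s i l : ℕ}
    (hC : ContribP e N rho Q t r s i) (hl : l < i) :
    runnerCount e N rho l ≤ Mth e t l := by
  have hw := (C.contrib_bound hC).1
  obtain ⟨hi, hr, hs, hsQ, hTeq⟩ := hC
  have hmono := Mth_mono C.he0 t (le_of_lt hl)
  have hgap := C.bgap i hi l hl
  have hwd := C.wt_le hi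
  omega

lemma facts1 (C : Ctx e N d rho mu Q) {t : ℤ} {r s i l : ℕ}
    (hC : ContribP e N rho Q t r s i) (hil : i < l) (hle : l < e) :
    Mth e t l ≤ runnerCount e N rho l ∧
      Q l (runnerCount e N rho l - Mth e t l + 1) = 0 := by
  have hcb := C.contrib_bound hC
  obtain ⟨hi, hr, hs, hsQ, hTeq⟩ := hC
  have hmono := Mth_mono C.he0 t (le_of_lt hil)
  have hgap := C.bgap l hle i hil
  have hwd := C.wt_le hi
  have hM : Mth e t l ≤ runnerCount e N rho l := by omega
  refine ⟨hM, ?_⟩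
  by_contra h0
  have h0' : 1 ≤ Q l (runnerCount e N rho l - Mth e t l + 1) := Nat.pos_of_ne_zero h0
  have hwl := C.wt_ge hle (by omega) h0'
  have hpair := C.wt_pair hi hle (Nat.ne_of_lt hil)
  omega

lemma countZ_mono (C : Ctx e N d rho mu Q) (t : ℤ) : countZ N rho t ≤ countZ N mu t := by
  rw [C.countZ_rho t, C.countZ_mu t]
  refine Finset.sum_le_sum ?_
  intro l hl
  have h : runnerCount e N rho l ≤ RmuF e N rho Q t l + Mth e t l := C.Rmu_lb t
  omega

lemma pos (C : Ctx e N d rho mu Q) {t ω : ℤ} (h1 : (countZ N rho t : ℤ) < ω)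
    (h2 : ω ≤ (countZ N mu t : ℤ)) : 1 ≤ ω ∧ (N : ℤ) < t + ω := by
  have h0 : (0:ℤ) ≤ (countZ N rho t : ℤ) := Int.ofNat_nonneg _
  have hω1 : 1 ≤ ω := by omega
  refine ⟨hω1, ?_⟩
  by_contra hc
  push_neg at hc
  have hωN : ω ≤ (N : ℤ) := le_trans h2 (by exact_mod_cast countZ_le C.hmup t)
  set w := ω.toNat with hw
  have hwN : w ≤ N := by omega
  have hsub : ∀ k ∈ Finset.Icc 1 w, (fun k => rho k + N - k) k ∈
      (beadSet N rho).filter (fun x : ℕ => t ≤ (x : ℤ)) := by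
    intro k hk
    simp only [mem_Icc] at hk
    rw [mem_filter]
    refine ⟨bead_mem.mpr ⟨k, hk.1, le_trans hk.2 hwN, rfl⟩, ?_⟩
    show t ≤ ((rho k + N - k : ℕ) : ℤ)
    have hkN : k ≤ N := le_trans hk.2 hwN
    omega
  have hinj : Set.InjOn (fun k => rho k + N - k) (Finset.Icc 1 w : Finset ℕ) := by
    intro a ha b hb hab
    refine bead_injOn C.hrhop ?_ ?_ hab <;>
      simp only [coe_Icc, Set.mem_Icc] at * <;> omega
  have hcard := Finset.card_le_card_of_injOn _ hsub hinj
  rw [Nat.card_Icc] at hcard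
  unfold countZ at h1
  omega

lemma forward (C : Ctx e N d rho mu Q) {t : ℤ} {r s i : ℕ}
    (hC : ContribP e N rho Q t r s i) :
    (countZ N rho t : ℤ) < rowF e N rho t i r ∧
      rowF e N rho t i r ≤ (countZ N mu t : ℤ) := by
  obtain ⟨hi, hr, hs, hsQ, hTeq⟩ := hC
  have hC' : ContribP e N rho Q t r s i := ⟨hi, hr, hs, hsQ, hTeq⟩
  have hrb := C.r_le_b hi (le_trans hs hsQ)
  have hsplitN : ∀ f : ℕ → ℕ, ∑ l ∈ range e, f l
      = ∑ l ∈ range (i+1), f l + ∑ l ∈ Finset.Ico (i+1) e, f l := by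
    intro f
    rw [range_eq_Ico, range_eq_Ico]
    exact (Finset.sum_Ico_consecutive _ (Nat.zero_le _) (by omega)).symm
  have hIcoCast : ∀ l ∈ Finset.Ico (i+1) e,
      ((runnerCount e N rho l - Mth e t l : ℕ) : ℤ)
        = (runnerCount e N rho l : ℤ) - (Mth e t l : ℤ) := by
    intro l hl
    rw [mem_Ico] at hl
    have := (C.facts1 hC' (by omega) hl.2).1
    omega
  constructor
  · have h1 : ∑ l ∈ range (i+1), (runnerCount e N rho l - Mth e t l) ≤ r - 1 := by
      rw [Finset.sum_range_succ]
      have h2 : ∑ l ∈ range i, (runnerCount e N rho l - Mth e t l) = 0 := by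
        refine Finset.sum_eq_zero ?_
        intro l hl
        have := C.facts2 hC' (mem_range.mp hl)
        omega
      omega
    have hA : (countZ N rho t : ℤ)
        = ((∑ l ∈ range (i+1), (runnerCount e N rho l - Mth e t l) : ℕ) : ℤ)
          + ∑ l ∈ Finset.Ico (i+1) e, ((runnerCount e N rho l : ℤ) - (Mth e t l : ℤ)) := by
      rw [C.countZ_rho t, hsplitN (fun l => runnerCount e N rho l - Mth e t l),
        Nat.cast_add]
      congr 1
      rw [Nat.cast_sum]
      exact Finset.sum_congr rfl hIcoCast
    have h5 : ((∑ l ∈ range (i+1), (runnerCount e N rho l - Mth e t l) : ℕ) : ℤ)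
        ≤ (r : ℤ) - 1 := by omega
    unfold rowF
    linarith
  · have hRi : r ≤ RmuF e N rho Q t i := C.Rmu_of_bead hi hr hrb (by omega)
    have hRlow : r ≤ ∑ l ∈ range (i+1), RmuF e N rho Q t l :=
      le_trans hRi (Finset.single_le_sum (fun _ _ => Nat.zero_le _)
        (mem_range.mpr (by omega)))
    have hREq : ∀ l ∈ Finset.Ico (i+1) e, ((RmuF e N rho Q t l : ℕ) : ℤ)
        = (runnerCount e N rho l : ℤ) - (Mth e t l : ℤ) := by
      intro l hl
      rw [mem_Ico] at hl
      obtain ⟨hMl, h0⟩ := C.facts1 hC' (by omega) hl.2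
      rw [C.Rmu_eq hl.2 hMl h0]
      omega
    have hB : (countZ N mu t : ℤ)
        = ((∑ l ∈ range (i+1), RmuF e N rho Q t l : ℕ) : ℤ)
          + ∑ l ∈ Finset.Ico (i+1) e, ((runnerCount e N rho l : ℤ) - (Mth e t l : ℤ)) := by
      rw [C.countZ_mu t, hsplitN (fun l => RmuF e N rho Q t l), Nat.cast_add]
      congr 1
      rw [Nat.cast_sum]
      exact Finset.sum_congr rfl hREq
    have h5 : (r : ℤ) ≤ ((∑ l ∈ range (i+1), RmuF e N rho Q t l : ℕ) : ℤ) := by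
      exact_mod_cast hRlow
    unfold rowF
    linarith

lemma backward (C : Ctx e N d rho mu Q) {t ω : ℤ} (h1 : (countZ N rho t : ℤ) < ω)
    (h2 : ω ≤ (countZ N mu t : ℤ)) :
    ∃ r s i, ContribP e N rho Q t r s i ∧ ω = rowF e N rho t i r := by
  set G : ℕ → ℕ := fun n => ∑ l ∈ range n, (runnerCount e N rho l - Mth e t l)
      + ∑ l ∈ Finset.Ico n e, RmuF e N rho Q t l with hG
  have hG0 : G 0 = countZ N mu t := by
    have h00 : G 0 = ∑ l ∈ range 0, (runnerCount e N rho l - Mth e t l)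
        + ∑ l ∈ Finset.Ico 0 e, RmuF e N rho Q t l := rfl
    rw [h00, C.countZ_mu t, range_eq_Ico]
    simp
  have hGe : G e = countZ N rho t := by
    have hee : G e = ∑ l ∈ range e, (runnerCount e N rho l - Mth e t l)
        + ∑ l ∈ Finset.Ico e e, RmuF e N rho Q t l := rfl
    rw [hee, C.countZ_rho t]
    simp
  have hdesc : ∃ i, i < e ∧ (G (i+1) : ℤ) < ω ∧ ω ≤ (G i : ℤ) := by
    by_contra hno
    push_neg at hno
    have hind : ∀ k, k ≤ e → (G (e - k) : ℤ) < ω := by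
      intro k
      induction k with
      | zero =>
          intro _
          rw [Nat.sub_zero, hGe]
          exact h1
      | succ m ih =>
          intro hk
          have him := ih (by omega)
          have heq : e - m = (e - (m+1)) + 1 := by omega
          rw [heq] at him
          exact hno (e - (m+1)) (by have := C.he0; omega) him
    have h3 := hind e le_rfl
    rw [Nat.sub_self, hG0] at h3
    omega
  obtain ⟨i, hie, hlt, hge⟩ := hdesc
  have hGi : (G i : ℤ) = ((∑ l ∈ range i, (runnerCount e N rho l - Mth e t l) : ℕ) : ℤ)
      + (RmuF e N rho Q t i : ℤ) + ((∑ l ∈ Finset.Ico (i+1) e, RmuF e N rho Q t l : ℕ) : ℤ) := by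
    have hgi : G i = ∑ l ∈ range i, (runnerCount e N rho l - Mth e t l)
        + ∑ l ∈ Finset.Ico i e, RmuF e N rho Q t l := rfl
    rw [hgi, Finset.sum_eq_sum_Ico_succ_bot hie]
    push_cast
    ring
  have hGi1 : (G (i+1) : ℤ) = ((∑ l ∈ range i, (runnerCount e N rho l - Mth e t l) : ℕ) : ℤ)
      + ((runnerCount e N rho i - Mth e t i : ℕ) : ℤ)
      + ((∑ l ∈ Finset.Ico (i+1) e, RmuF e N rho Q t l : ℕ) : ℤ) := by
    have hgi : G (i+1) = ∑ l ∈ range (i+1), (runnerCount e N rho l - Mth e t l)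
        + ∑ l ∈ Finset.Ico (i+1) e, RmuF e N rho Q t l := rfl
    rw [hgi, Finset.sum_range_succ]
    push_cast
    ring
  set r : ℕ := (ω - ((∑ l ∈ range i, (runnerCount e N rho l - Mth e t l) : ℕ) : ℤ)
      - ((∑ l ∈ Finset.Ico (i+1) e, RmuF e N rho Q t l : ℕ) : ℤ)).toNat with hrdef
  have hr_eq : (r : ℤ) = ω - ((∑ l ∈ range i, (runnerCount e N rho l - Mth e t l) : ℕ) : ℤ)
      - ((∑ l ∈ Finset.Ico (i+1) e, RmuF e N rho Q t l : ℕ) : ℤ) := by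
    rw [hrdef]
    refine Int.toNat_of_nonneg ?_
    omega
  have hup : (r : ℤ) ≤ (RmuF e N rho Q t i : ℤ) := by omega
  have hlow : ((runnerCount e N rho i - Mth e t i : ℕ) : ℤ) < (r : ℤ) := by omega
  have hr1 : 1 ≤ r := by omega
  have hrR : r ≤ RmuF e N rho Q t i := by exact_mod_cast hup
  obtain ⟨hrb, hpred⟩ := C.Rmu_bead (t := t) hie hr1 hrR
  have hbM : runnerCount e N rho i - Mth e t i < r := by exact_mod_cast hlow
  set s : ℕ := Mth e t i + r - runnerCount e N rho i with hsdef
  have hs1 : 1 ≤ s := by omega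
  have hsQ : s ≤ Q i r := by omega
  have hTeq : runnerCount e N rho i + s = Mth e t i + r := by omega
  have hCc : ContribP e N rho Q t r s i := ⟨hie, hr1, hs1, hsQ, hTeq⟩
  refine ⟨r, s, i, hCc, ?_⟩
  have hA0 : (∑ l ∈ range i, (runnerCount e N rho l - Mth e t l)) = 0 := by
    refine Finset.sum_eq_zero ?_
    intro l hl
    have := C.facts2 hCc (mem_range.mp hl)
    omega
  have hBeq : ((∑ l ∈ Finset.Ico (i+1) e, RmuF e N rho Q t l : ℕ) : ℤ)
      = ∑ l ∈ Finset.Ico (i+1) e, ((runnerCount e N rho l : ℤ) - (Mth e t l : ℤ)) := by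
    rw [Nat.cast_sum]
    refine Finset.sum_congr rfl ?_
    intro l hl
    rw [mem_Ico] at hl
    obtain ⟨hMl, h0⟩ := C.facts1 hCc (by omega) hl.2
    rw [C.Rmu_eq hl.2 hMl h0]
    omega
  unfold rowF
  rw [← hBeq]
  rw [hA0] at hr_eq
  simp only [Nat.cast_zero] at hr_eq
  omega

lemma contrib_not_lt (C : Ctx e N d rho mu Q) {t : ℤ} {r s i r' s' i' : ℕ}
    (hC : ContribP e N rho Q t r s i) (hC' : ContribP e N rho Q t r' s' i')
    (hlt : i < i') : False := by
  obtain ⟨hMl, h0⟩ := C.facts1 hC hlt hC'.1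
  obtain ⟨hi', hr', hs', hsQ', hTeq'⟩ := hC'
  have hk : runnerCount e N rho i' - Mth e t i' + 1 ≤ r' := by omega
  have hanti := C.Q_anti hi' (k := runnerCount e N rho i' - Mth e t i' + 1) (by omega) hk
  rw [h0] at hanti
  omega

lemma unique (C : Ctx e N d rho mu Q) {t : ℤ} {r s i r' s' i' : ℕ}
    (hC : ContribP e N rho Q t r s i) (hC' : ContribP e N rho Q t r' s' i')
    (hrow : rowF e N rho t i r = rowF e N rho t i' r') :
    r = r' ∧ s = s' ∧ i = i' := by
  have hii : i = i' := by
    rcases Nat.lt_trichotomy i i' with h | h | h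
    · exact (C.contrib_not_lt hC hC' h).elim
    · exact h
    · exact (C.contrib_not_lt hC' hC h).elim
  subst hii
  have hrr : r = r' := by
    unfold rowF at hrow
    have h2 : (r : ℤ) = (r' : ℤ) := add_right_cancel hrow
    exact_mod_cast h2
  subst hrr
  obtain ⟨_, _, _, _, h1⟩ := hC
  obtain ⟨_, _, _, _, h2⟩ := hC'
  exact ⟨rfl, by omega, rfl⟩

lemma ydiff (C : Ctx e N d rho mu Q) {i : ℕ} (hi : i < e) (r s : ℕ) :
    ycoord e (runnerCount e N rho) r s i - xcoord e (runnerCount e N rho) r s i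
      = (e : ℤ) * ((runnerCount e N rho i : ℤ) - r + s) - N := by
  have hN : ((N : ℕ) : ℤ) = ∑ l ∈ range e, (runnerCount e N rho l : ℤ) := by
    exact_mod_cast (congrArg (Nat.cast : ℕ → ℤ) C.sumb).symm
  have h1 : ∑ l ∈ range (i+1), (runnerCount e N rho l : ℤ)
      + ∑ l ∈ Finset.Ico (i+1) e, (runnerCount e N rho l : ℤ)
      = ∑ l ∈ range e, (runnerCount e N rho l : ℤ) := by
    rw [range_eq_Ico, range_eq_Ico]
    exact Finset.sum_Ico_consecutive _ (Nat.zero_le _) (by omega)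
  rw [Finset.sum_range_succ] at h1
  unfold ycoord xcoord
  rw [hN, ← h1]
  ring

lemma hook_iff (C : Ctx e N d rho mu Q) {r s i : ℕ}
    (hcond : i < e ∧ 1 ≤ r ∧ 1 ≤ s ∧ s ≤ Q i r) (u : ℤ × ℤ) :
    u ∈ hookSet e (runnerCount e N rho) r s i ↔
      (ContribP e N rho Q ((N : ℤ) - u.1 + u.2) r s i ∧
        u.1 = rowF e N rho ((N : ℤ) - u.1 + u.2) i r) := by
  obtain ⟨hi, hr, hs, hsQ⟩ := hcond
  have he0 := C.he0
  have hie : (i : ℤ) < e := by exact_mod_cast hi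
  set t : ℤ := (N : ℤ) - u.1 + u.2 with ht
  have hrb : r ≤ runnerCount e N rho i := C.r_le_b hi (le_trans hs hsQ)
  set Tn : ℕ := runnerCount e N rho i + s - r with hTn
  have hTcast : (Tn : ℤ) = (runnerCount e N rho i : ℤ) - r + s := by omega
  have hT1 : 1 ≤ Tn := by omega
  have hYX : ycoord e (runnerCount e N rho) r s i - xcoord e (runnerCount e N rho) r s i
      = (e : ℤ) * Tn - N := by rw [C.ydiff hi r s, hTcast]
  have hcontrib : ContribP e N rho Q t r s i ↔ Mth e t i = Tn := by
    constructor
    · rintro ⟨-, -, -, -, hTeq⟩; omega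
    · intro h; exact ⟨hi, hr, hs, hsQ, by omega⟩
  have hrow_vert : (e : ℤ) * (Mth e t i) ≤ t → Mth e t i = Tn →
      rowF e N rho t i r = xcoord e (runnerCount e N rho) r s i := by
    intro hv hM
    have hMl : ∀ l ∈ Finset.Ico (i+1) e, (Mth e t l : ℤ) = (Tn : ℤ) := by
      intro l hl
      rw [mem_Ico] at hl
      rw [Mth_eq_of_ge he0 hv (by omega : i ≤ l) hl.2, hM]
    unfold rowF xcoord
    rw [Finset.sum_sub_distrib, Finset.sum_congr rfl hMl, Finset.sum_const, Nat.card_Ico,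
      nsmul_eq_mul]
    rw [show (runnerCount e N rho i : ℤ) - r + s = (Tn : ℤ) from hTcast.symm]
    have hcast : ((e - (i+1) : ℕ) : ℤ) = (e : ℤ) - i - 1 := by omega
    rw [hcast]
    ring
  have hrow_horiz : t < (e : ℤ) * (Mth e t i) → Mth e t i = Tn →
      rowF e N rho t i r = ycoord e (runnerCount e N rho) r s i + (N : ℤ) - t := by
    intro hv hM
    have hM1 : 1 ≤ Mth e t i := by omega
    have hMc : (Mth e t i : ℤ) = (Tn : ℤ) := by exact_mod_cast hM
    have hMl : ∀ l ∈ range (i+1), (Mth e t l : ℤ) = (Tn : ℤ) := by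
      intro l hl
      rw [mem_range] at hl
      rw [Mth_eq_of_lt he0 hv (by omega : l ≤ i), hM]
    have ht1 : 1 ≤ t := by
      have hg := Mth_gt he0 t i hM1
      have h2 : (0 : ℤ) ≤ (Mth e t i : ℤ) - 1 := by
        have : (1 : ℤ) ≤ (Mth e t i : ℤ) := by exact_mod_cast hM1
        omega
      have h3 : (0 : ℤ) ≤ (e : ℤ) * ((Mth e t i : ℤ) - 1) :=
        mul_nonneg (by positivity) h2
      have hi0 : (0 : ℤ) ≤ (i : ℤ) := by positivity
      linarith
    have hsumM := sumM he0 ht1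
    have hsplit : ∑ l ∈ range e, (Mth e t l : ℤ)
        = ∑ l ∈ range (i+1), (Mth e t l : ℤ) + ∑ l ∈ Finset.Ico (i+1) e, (Mth e t l : ℤ) := by
      rw [range_eq_Ico, range_eq_Ico]
      exact (Finset.sum_Ico_consecutive _ (Nat.zero_le _) (by omega)).symm
    have h1 : ∑ l ∈ range (i+1), (Mth e t l : ℤ) = ((i : ℤ) + 1) * Tn := by
      rw [Finset.sum_congr rfl hMl, Finset.sum_const, card_range, nsmul_eq_mul]
      push_cast
      ring
    have hsumIco : ∑ l ∈ Finset.Ico (i+1) e, (Mth e t l : ℤ) = t - ((i : ℤ) + 1) * Tn := by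
      rw [← h1]
      omega
    have hbN : (N : ℤ) = ∑ l ∈ range i, (runnerCount e N rho l : ℤ)
        + (runnerCount e N rho i : ℤ)
        + ∑ l ∈ Finset.Ico (i+1) e, (runnerCount e N rho l : ℤ) := by
      have hsb : ((N : ℕ) : ℤ) = ∑ l ∈ range e, (runnerCount e N rho l : ℤ) :=
        (congrArg (Nat.cast : ℕ → ℤ) C.sumb).symm.trans (by push_cast; rfl)
      have h2 : ∑ l ∈ range (i+1), (runnerCount e N rho l : ℤ)
          + ∑ l ∈ Finset.Ico (i+1) e, (runnerCount e N rho l : ℤ)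
          = ∑ l ∈ range e, (runnerCount e N rho l : ℤ) := by
        rw [range_eq_Ico, range_eq_Ico]
        exact Finset.sum_Ico_consecutive _ (Nat.zero_le _) (by omega)
      rw [Finset.sum_range_succ] at h2
      rw [hsb, ← h2]
    unfold rowF ycoord
    rw [Finset.sum_sub_distrib, hsumIco]
    rw [show (runnerCount e N rho i : ℤ) - r + s = (Tn : ℤ) from hTcast.symm]
    have hTr : (Tn : ℤ) = (runnerCount e N rho i : ℤ) - r + s := hTcast
    linarith [hbN]
  constructor
  · intro hu
    rcases hu with ⟨hx, hy1, hy2⟩ | ⟨hy, hx1, hx2⟩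
    · -- vertical arm
      have hwin2 : t ≤ (e : ℤ) * (Tn : ℤ) + (i : ℤ) := by
        have : t = (N : ℤ) - u.1 + u.2 := ht
        linarith [hYX]
      have hv : (e : ℤ) * (Tn : ℤ) ≤ t := by linarith [hYX]
      have hM : Mth e t i = Tn := by
        have ha : Mth e t i ≤ Tn := (Mth_iff he0 t i Tn).mp hwin2
        have hb2 : Tn ≤ Mth e t i := by
          by_contra hc
          push_neg at hc
          have h4 : Mth e t i ≤ Tn - 1 := by omega
          have h5 := (Mth_iff he0 t i (Tn - 1)).mpr h4
          have h6 : ((Tn - 1 : ℕ) : ℤ) = (Tn : ℤ) - 1 := by omega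
          rw [h6] at h5
          have h7 : (e : ℤ) * ((Tn : ℤ) - 1) = (e : ℤ) * Tn - e := by ring
          linarith
        omega
      have hMc : (Mth e t i : ℤ) = (Tn : ℤ) := by exact_mod_cast hM
      refine ⟨hcontrib.mpr hM, ?_⟩
      have hv' : (e : ℤ) * (Mth e t i) ≤ t := by rw [hMc]; exact hv
      exact hx.trans (hrow_vert hv' hM).symm
    · -- horizontal arm
      have hup : t ≤ (e : ℤ) * (Tn : ℤ) + (i : ℤ) := by
        have hi0 : (0 : ℤ) ≤ (i : ℤ) := by positivity
        linarith [hYX]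
      have hlow : (e : ℤ) * (Tn : ℤ) - e + 1 + i ≤ t := by linarith [hYX]
      have hM : Mth e t i = Tn := by
        have ha : Mth e t i ≤ Tn := (Mth_iff he0 t i Tn).mp hup
        have hb2 : Tn ≤ Mth e t i := by
          by_contra hc
          push_neg at hc
          have h4 : Mth e t i ≤ Tn - 1 := by omega
          have h5 := (Mth_iff he0 t i (Tn - 1)).mpr h4
          have h6 : ((Tn - 1 : ℕ) : ℤ) = (Tn : ℤ) - 1 := by omega
          rw [h6] at h5
          have h7 : (e : ℤ) * ((Tn : ℤ) - 1) = (e : ℤ) * Tn - e := by ring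
          linarith
        omega
      have hMc : (Mth e t i : ℤ) = (Tn : ℤ) := by exact_mod_cast hM
      refine ⟨hcontrib.mpr hM, ?_⟩
      by_cases hv : (e : ℤ) * (Mth e t i) ≤ t
      · have h8 := hrow_vert hv hM
        rw [hMc] at hv
        rw [h8]
        linarith [hYX]
      · push_neg at hv
        have h8 := hrow_horiz hv hM
        rw [h8]
        linarith
  · rintro ⟨hCc, hrowu⟩
    have hM : Mth e t i = Tn := hcontrib.mp hCc
    have hMc : (Mth e t i : ℤ) = (Tn : ℤ) := by exact_mod_cast hM
    have hup : t ≤ (e : ℤ) * (Tn : ℤ) + i := by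
      have h2 := Mth_self he0 t i
      rw [hMc] at h2
      exact h2
    have hlow : (e : ℤ) * (Tn : ℤ) - e + 1 + i ≤ t := by
      have hg := Mth_gt he0 t i (by omega : 1 ≤ Mth e t i)
      rw [hMc] at hg
      have h7 : (e : ℤ) * ((Tn : ℤ) - 1) = (e : ℤ) * Tn - e := by ring
      linarith
    by_cases hv : (e : ℤ) * (Mth e t i) ≤ t
    · left
      have h8 := hrow_vert hv hM
      have hx : u.1 = xcoord e (runnerCount e N rho) r s i := hrowu.trans h8
      rw [hMc] at hv
      refine ⟨hx, ?_, ?_⟩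
      · linarith [hYX]
      · linarith [hYX]
    · right
      push_neg at hv
      have h8 := hrow_horiz hv hM
      have hx : u.1 = ycoord e (runnerCount e N rho) r s i + (N : ℤ) - t := hrowu.trans h8
      rw [hMc] at hv
      refine ⟨?_, ?_, ?_⟩
      · linarith
      · linarith [hYX]
      · linarith [hYX]

end Ctx

/-- Let `rho` be a `d`-Rouquier `e`-core of residue
`κ = -N mod e` and `mu ∈ P_{ρ,d}` with `e`-quotient `Q`.  Then `Y(mu)` is the
disjoint union of `Y(rho)` and the hooks `H(u)`, `u ∈ Y(Q)`, and every such
hook has vertex of residue `κ`. -/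
theorem rock_hook_decomposition
    (e N d : ℕ) (he : 2 ≤ e) (hd : 1 ≤ d)
    (rho : ℕ → ℕ) (hrhop : IsPartitionFrom1 rho) (hrhov : VanishBeyond N rho)
    (hcore : pushedBeads e N rho = beadSet N rho)
    (hrq : ∀ i, i + 1 < e →
      runnerCount e N rho i + d ≤ runnerCount e N rho (i + 1) + 1)
    (mu : ℕ → ℕ) (hmu : InBlock e N d rho mu)
    (Q : ℕ → ℕ → ℕ) (hQp : ∀ i, i < e → IsPartitionFrom1 (Q i))
    (hQ : IsQuotientOf e N mu Q) :
    (YD mu = YD rho ∪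
      {u : ℤ × ℤ | ∃ r s i : ℕ, (i < e ∧ 1 ≤ r ∧ 1 ≤ s ∧ s ≤ Q i r) ∧
        u ∈ hookSet e (runnerCount e N rho) r s i}) ∧
    (∀ r s i : ℕ, (i < e ∧ 1 ≤ r ∧ 1 ≤ s ∧ s ≤ Q i r) →
      ∀ u ∈ hookSet e (runnerCount e N rho) r s i, u ∉ YD rho) ∧
    (∀ r s i r' s' i' : ℕ,
      (i < e ∧ 1 ≤ r ∧ 1 ≤ s ∧ s ≤ Q i r) →
      (i' < e ∧ 1 ≤ r' ∧ 1 ≤ s' ∧ s' ≤ Q i' r') →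
      ¬(r = r' ∧ s = s' ∧ i = i') →
      ∀ u ∈ hookSet e (runnerCount e N rho) r s i,
        u ∉ hookSet e (runnerCount e N rho) r' s' i') ∧
    (∀ r s i : ℕ, (i < e ∧ 1 ≤ r ∧ 1 ≤ s ∧ s ≤ Q i r) →
      (ycoord e (runnerCount e N rho) r s i -
        xcoord e (runnerCount e N rho) r s i) % (e : ℤ) = (-(N : ℤ)) % (e : ℤ)) := by
  obtain ⟨hmup, hmuv, hmupush, hmuwt⟩ := hmu
  have C : Ctx e N d rho mu Q :=
    ⟨he, hd, hrhop, hrhov, hcore, hrq, hmup, hmuv, hmupush, hmuwt, hQp, hQ⟩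
  refine ⟨?_, ?_, ?_, ?_⟩
  · ext u
    rw [Set.mem_union]
    rw [YD_iff_count C.hmup C.hmuv u, YD_iff_count C.hrhop C.hrhov u]
    constructor
    · rintro ⟨h1, h2, h3⟩
      by_cases h : u.1 ≤ (countZ N rho ((N : ℤ) - u.1 + u.2) : ℤ)
      · exact Or.inl ⟨h1, h2, h⟩
      · push_neg at h
        right
        obtain ⟨r, s, i, hCc, hrow⟩ := C.backward h h3
        exact ⟨r, s, i, ⟨hCc.1, hCc.2.1, hCc.2.2.1, hCc.2.2.2.1⟩,
          (C.hook_iff ⟨hCc.1, hCc.2.1, hCc.2.2.1, hCc.2.2.2.1⟩ u).mpr ⟨hCc, hrow⟩⟩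
    · rintro (⟨h1, h2, h3⟩ | hhook)
      · exact ⟨h1, h2, le_trans h3 (by exact_mod_cast C.countZ_mono ((N : ℤ) - u.1 + u.2))⟩
      · obtain ⟨r, s, i, hcnd, hmem⟩ := hhook
        rw [C.hook_iff hcnd u] at hmem
        obtain ⟨hCc, hrow⟩ := hmem
        have hf := C.forward hCc
        rw [← hrow] at hf
        have hp := C.pos hf.1 hf.2
        have hp2 := hp.2
        exact ⟨hp.1, by omega, hf.2⟩
  · intro r s i hcnd u hu hurho
    rw [C.hook_iff hcnd u] at hu
    have hf := C.forward hu.1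
    rw [← hu.2] at hf
    rw [YD_iff_count C.hrhop C.hrhov u] at hurho
    have h1 := hurho.2.2
    have h2 := hf.1
    omega
  · intro r s i r' s' i' hcnd hcnd' hne u hu hu'
    rw [C.hook_iff hcnd u] at hu
    rw [C.hook_iff hcnd' u] at hu'
    exact hne (C.unique hu.1 hu'.1 (hu.2.symm.trans hu'.2))
  · intro r s i hcnd
    rw [C.ydiff hcnd.1 r s]
    rw [show (e : ℤ) * ((runnerCount e N rho i : ℤ) - r + s) - N
        = -(N : ℤ) + ((runnerCount e N rho i : ℤ) - r + s) * e by ring]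
    rw [Int.add_mul_emod_self_right]
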